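/- Let H ∈ ℝ^{n×n} with H + Hᵀ positive definite, f ∈ ℝⁿ, A ∈ ℝ^{m×n}, b ∈ ℝᵐ, and let (x*, λ*) satisfy the KKT conditions of the AVI with active set 𝒜 = {i : Aᵢx* = bᵢ}. Assume the rows {Aᵢ : i ∈ 𝒜} are linearly independent (LICQ) and λ*ᵢ > 0 for every i ∈ 𝒜 (strict complementarity). Let ρ > 0, H̃ := ρI + ½(H + Hᵀ), f̃(z) := f + (H − H̃)z. Then the QP subproblem with parameter z = x* also satisfies LICQ and strict complementarity at its solution: its unique minimizer is x*, the set of constraints active at this minimizer equals 𝒜 and has linearly independent gradients, any KKT multiplier λ of this QP equals λ*, and λ*ᵢ > 0 for all i ∈ 𝒜. -/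
import Mathlib


open Matrix

/-- `H̃ = ρ I + ½ (H + Hᵀ)`. -/
noncomputable def Htil {n : ℕ} (H : Matrix (Fin n) (Fin n) ℝ) (ρ : ℝ) :
    Matrix (Fin n) (Fin n) ℝ :=
  ρ • (1 : Matrix (Fin n) (Fin n) ℝ) + (2⁻¹ : ℝ) • (H + Hᵀ)

/-- `f̃(z) = f + (H − H̃) z`. -/
noncomputable def ftil {n : ℕ} (H : Matrix (Fin n) (Fin n) ℝ) (f : Fin n → ℝ)
    (ρ : ℝ) (z : Fin n → ℝ) : Fin n → ℝ :=
  f + (H - Htil H ρ) *ᵥ z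

/-- The Douglas–Rachford QP objective `½ xᵀ H̃ x + f̃(z)ᵀ x`. -/
noncomputable def qpObj {n : ℕ} (H : Matrix (Fin n) (Fin n) ℝ) (f : Fin n → ℝ)
    (ρ : ℝ) (z x : Fin n → ℝ) : ℝ :=
  2⁻¹ * (x ⬝ᵥ (Htil H ρ *ᵥ x)) + ftil H f ρ z ⬝ᵥ x

/-- transfer of regularity: Let `(x*, λ*)` satisfy the KKT
conditions of the AVI with active set `𝒜 = {i : Aᵢ x* = bᵢ}`, and assume LICQ
and strict complementarity. Then for the Douglas–Rachford QP subproblem with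
parameter `z = x*`: its unique minimizer is `x*`; the set of constraints active
at any minimizer equals `𝒜` and has linearly independent gradients; any KKT
multiplier `λ` of this QP equals `λ*`; and `λ*ᵢ > 0` for all `i ∈ 𝒜`. -/
private lemma htil_symm {n : ℕ} (H : Matrix (Fin n) (Fin n) ℝ) (ρ : ℝ) :
    (Htil H ρ)ᵀ = Htil H ρ := by
  unfold Htil
  simp [Matrix.transpose_add, Matrix.transpose_smul, add_comm]

private lemma symmDot {n : ℕ} {M : Matrix (Fin n) (Fin n) ℝ} (hM : Mᵀ = M)
    (a c : Fin n → ℝ) : a ⬝ᵥ (M *ᵥ c) = c ⬝ᵥ (M *ᵥ a) := by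
  rw [Matrix.dotProduct_mulVec, ← Matrix.mulVec_transpose, hM]
  exact dotProduct_comm _ _

private lemma htil_pos {n : ℕ} {H : Matrix (Fin n) (Fin n) ℝ}
    (hpd : ∀ v : Fin n → ℝ, v ≠ 0 → 0 < v ⬝ᵥ ((H + Hᵀ) *ᵥ v))
    {ρ : ℝ} (hρ : 0 < ρ) (v : Fin n → ℝ) (hv : v ≠ 0) :
    0 < v ⬝ᵥ (Htil H ρ *ᵥ v) := by
  have h1 : v ⬝ᵥ (Htil H ρ *ᵥ v)
      = ρ * (v ⬝ᵥ v) + 2⁻¹ * (v ⬝ᵥ ((H + Hᵀ) *ᵥ v)) := by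
    simp [Htil, Matrix.add_mulVec, Matrix.smul_mulVec, Matrix.one_mulVec,
      dotProduct_add, dotProduct_smul, smul_eq_mul, mul_add]
  have h2 : (0:ℝ) ≤ v ⬝ᵥ v := Finset.sum_nonneg fun i _ => mul_self_nonneg (v i)
  have h3 := hpd v hv
  nlinarith

private lemma qp_expand {n : ℕ} (H : Matrix (Fin n) (Fin n) ℝ) (f : Fin n → ℝ)
    (ρ : ℝ) (z x₀ x : Fin n → ℝ) :
    qpObj H f ρ z x = qpObj H f ρ z x₀
      + 2⁻¹ * ((x - x₀) ⬝ᵥ (Htil H ρ *ᵥ (x - x₀)))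
      + (Htil H ρ *ᵥ x₀ + ftil H f ρ z) ⬝ᵥ (x - x₀) := by
  have hsym := htil_symm H ρ
  have h1 : x₀ ⬝ᵥ (Htil H ρ *ᵥ x) = x ⬝ᵥ (Htil H ρ *ᵥ x₀) := symmDot hsym _ _
  have h2 : (Htil H ρ *ᵥ x₀) ⬝ᵥ x = x ⬝ᵥ (Htil H ρ *ᵥ x₀) :=
    dotProduct_comm _ _
  have h3 : (Htil H ρ *ᵥ x₀) ⬝ᵥ x₀ = x₀ ⬝ᵥ (Htil H ρ *ᵥ x₀) :=
    dotProduct_comm _ _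
  unfold qpObj
  simp only [Matrix.mulVec_sub, dotProduct_sub, sub_dotProduct,
    add_dotProduct, dotProduct_add]
  rw [h1, h2, h3]
  ring



theorem transfer_of_regularity (n m : ℕ) (H : Matrix (Fin n) (Fin n) ℝ)
    (f : Fin n → ℝ) (A : Matrix (Fin m) (Fin n) ℝ) (b : Fin m → ℝ)
    (hpd : ∀ v : Fin n → ℝ, v ≠ 0 → 0 < v ⬝ᵥ ((H + Hᵀ) *ᵥ v))
    (xs : Fin n → ℝ) (ls : Fin m → ℝ)
    (hstat : H *ᵥ xs + f + Aᵀ *ᵥ ls = 0)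
    (hlpos : 0 ≤ ls)
    (hfeas : A *ᵥ xs ≤ b)
    (hcomp : ∀ i : Fin m, ls i * (b i - A i ⬝ᵥ xs) = 0)
    (hlicq : LinearIndependent ℝ
      (fun i : {i : Fin m // A i ⬝ᵥ xs = b i} => A i.1))
    (hstrict : ∀ i : Fin m, A i ⬝ᵥ xs = b i → 0 < ls i)
    (ρ : ℝ) (hρ : 0 < ρ) :
    -- `x*` is a minimizer of the QP subproblem with parameter `z = x*` …
    (A *ᵥ xs ≤ b ∧ ∀ x : Fin n → ℝ, A *ᵥ x ≤ b →
        qpObj H f ρ xs xs ≤ qpObj H f ρ xs x) ∧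
    -- … and it is the unique one;
    (∀ y : Fin n → ℝ,
      (A *ᵥ y ≤ b ∧ ∀ x : Fin n → ℝ, A *ᵥ x ≤ b →
          qpObj H f ρ xs y ≤ qpObj H f ρ xs x) →
      y = xs ∧
      -- the active set at the minimizer equals `𝒜` …
      {i : Fin m | A i ⬝ᵥ y = b i} = {i : Fin m | A i ⬝ᵥ xs = b i} ∧
      -- … and its gradients are linearly independent (LICQ for the QP);
      LinearIndependent ℝ
        (fun i : {i : Fin m // A i ⬝ᵥ y = b i} => A i.1)) ∧
    -- any KKT multiplier of the QP subproblem equals `λ*` …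
    (∀ (x : Fin n → ℝ) (l : Fin m → ℝ),
      (Htil H ρ *ᵥ x + ftil H f ρ xs + Aᵀ *ᵥ l = 0 ∧ 0 ≤ l ∧
        A *ᵥ x ≤ b ∧ ∀ i : Fin m, l i * (b i - A i ⬝ᵥ x) = 0) →
      l = ls) ∧
    -- … and strict complementarity holds: `λ*ᵢ > 0` on `𝒜`.
    (∀ i : Fin m, A i ⬝ᵥ xs = b i → 0 < ls i) := by
  classical
  have hls : ∀ i, 0 ≤ ls i := fun i => hlpos i
  have hfeas' : ∀ i, A i ⬝ᵥ xs ≤ b i := fun i => hfeas i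
  have hactive : ∀ i, 0 < ls i → A i ⬝ᵥ xs = b i := by
    intro i hi
    rcases mul_eq_zero.mp (hcomp i) with h | h
    · exact absurd h (ne_of_gt hi)
    · linarith [sub_eq_zero.mp h]
  have hlszero : ∀ i, A i ⬝ᵥ xs ≠ b i → ls i = 0 := by
    intro i hi
    rcases mul_eq_zero.mp (hcomp i) with h | h
    · exact h
    · exact absurd (sub_eq_zero.mp h).symm hi
  have hgrad : Htil H ρ *ᵥ xs + ftil H f ρ xs = -(Aᵀ *ᵥ ls) := by
    have h0 : H *ᵥ xs + f = -(Aᵀ *ᵥ ls) := eq_neg_of_add_eq_zero_left hstat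
    have h2 : Htil H ρ *ᵥ xs + (f + (H *ᵥ xs - Htil H ρ *ᵥ xs))
        = H *ᵥ xs + f := by abel
    rw [ftil, Matrix.sub_mulVec, h2, h0]
  have hAdot : ∀ (w : Fin m → ℝ) (d : Fin n → ℝ),
      (Aᵀ *ᵥ w) ⬝ᵥ d = w ⬝ᵥ (A *ᵥ d) := by
    intro w d
    rw [Matrix.mulVec_transpose]
    exact (Matrix.dotProduct_mulVec _ _ _).symm
  have hpair : ∀ (μ : Fin m → ℝ) (u w : Fin n → ℝ),
      (∀ i, 0 ≤ μ i) → (∀ i, A i ⬝ᵥ u ≤ b i) →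
      (∀ i, 0 < μ i → A i ⬝ᵥ w = b i) →
      μ ⬝ᵥ (A *ᵥ (u - w)) ≤ 0 := by
    intro μ u w h0 hu hw
    have hrow : ∀ i, (A *ᵥ (u - w)) i = A i ⬝ᵥ u - A i ⬝ᵥ w := by
      intro i
      rw [Matrix.mulVec_sub]
      rfl
    calc μ ⬝ᵥ (A *ᵥ (u - w)) = ∑ i, μ i * (A i ⬝ᵥ u - A i ⬝ᵥ w) :=
          Finset.sum_congr rfl fun i _ => by rw [show (A *ᵥ (u - w)) i = A i ⬝ᵥ u - A i ⬝ᵥ w from hrow i]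
      _ ≤ 0 := by
          apply Finset.sum_nonpos
          intro i _
          rcases eq_or_lt_of_le (h0 i) with h | h
          · simp [← h]
          · have hb := hw i h
            nlinarith [hu i]
  have hMnn : ∀ v : Fin n → ℝ, 0 ≤ v ⬝ᵥ (Htil H ρ *ᵥ v) := by
    intro v
    by_cases hv : v = 0
    · subst hv; simp
    · exact (htil_pos hpd hρ v hv).le
  have hmin : ∀ x : Fin n → ℝ, A *ᵥ x ≤ b →
      qpObj H f ρ xs xs ≤ qpObj H f ρ xs x := by
    intro x hx
    have hx' : ∀ i, A i ⬝ᵥ x ≤ b i := fun i => hx i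
    rw [qp_expand H f ρ xs xs x, hgrad]
    have h1 := hMnn (x - xs)
    have h2 : (-(Aᵀ *ᵥ ls)) ⬝ᵥ (x - xs) = -(ls ⬝ᵥ (A *ᵥ (x - xs))) := by
      rw [neg_dotProduct, hAdot]
    have h3 := hpair ls x xs hls hx' hactive
    rw [h2]
    linarith
  refine ⟨⟨hfeas, hmin⟩, ?_, ?_, hstrict⟩
  · rintro y ⟨hyf, hymin⟩
    have hy' : ∀ i, A i ⬝ᵥ y ≤ b i := fun i => hyf i
    have e1 : qpObj H f ρ xs y = qpObj H f ρ xs xs :=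
      le_antisymm (hymin xs hfeas) (hmin y hyf)
    have e2 := qp_expand H f ρ xs xs y
    rw [hgrad, e1] at e2
    have h2 : (-(Aᵀ *ᵥ ls)) ⬝ᵥ (y - xs) = -(ls ⬝ᵥ (A *ᵥ (y - xs))) := by
      rw [neg_dotProduct, hAdot]
    rw [h2] at e2
    have h3 := hpair ls y xs hls hy' hactive
    have hq : (y - xs) ⬝ᵥ (Htil H ρ *ᵥ (y - xs)) ≤ 0 := by linarith
    have hyx : y = xs := by
      by_contra h
      exact absurd hq
        (not_le.mpr (htil_pos hpd hρ _ (sub_ne_zero_of_ne h)))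
    subst hyx
    exact ⟨rfl, rfl, hlicq⟩
  · rintro x l ⟨hqstat, hl0, hxf, hqcomp⟩
    have hl' : ∀ i, 0 ≤ l i := fun i => hl0 i
    have hx' : ∀ i, A i ⬝ᵥ x ≤ b i := fun i => hxf i
    have hlact : ∀ i, 0 < l i → A i ⬝ᵥ x = b i := by
      intro i hi
      rcases mul_eq_zero.mp (hqcomp i) with h | h
      · exact absurd h (ne_of_gt hi)
      · linarith [sub_eq_zero.mp h]
    have hstat2 : Htil H ρ *ᵥ x + ftil H f ρ xs = -(Aᵀ *ᵥ l) :=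
      eq_neg_of_add_eq_zero_left hqstat
    have hdiff : Htil H ρ *ᵥ (x - xs) = Aᵀ *ᵥ (ls - l) := by
      have h1 : Htil H ρ *ᵥ x - Htil H ρ *ᵥ xs
          = (Htil H ρ *ᵥ x + ftil H f ρ xs)
            - (Htil H ρ *ᵥ xs + ftil H f ρ xs) := by abel
      rw [Matrix.mulVec_sub, h1, hstat2, hgrad, Matrix.mulVec_sub]
      abel
    have hq : (x - xs) ⬝ᵥ (Htil H ρ *ᵥ (x - xs)) ≤ 0 := by
      rw [hdiff]
      have e1 : (x - xs) ⬝ᵥ (Aᵀ *ᵥ (ls - l)) = (ls - l) ⬝ᵥ (A *ᵥ (x - xs)) := by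
        rw [dotProduct_comm, hAdot]
      rw [e1]
      have e2 : (ls - l) ⬝ᵥ (A *ᵥ (x - xs))
          = ls ⬝ᵥ (A *ᵥ (x - xs)) + l ⬝ᵥ (A *ᵥ (xs - x)) := by
        have hn : xs - x = -(x - xs) := by abel
        rw [hn, Matrix.mulVec_neg, dotProduct_neg,
          sub_dotProduct]
        ring
      rw [e2]
      have t1 := hpair ls x xs hls hx' hactive
      have t2 := hpair l xs x hl' hfeas' hlact
      linarith
    have hxeq : x = xs := by
      by_contra h
      exact absurd hq
        (not_le.mpr (htil_pos hpd hρ _ (sub_ne_zero_of_ne h)))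
    rw [hxeq] at hstat2 hqcomp
    have hAl : Aᵀ *ᵥ l = Aᵀ *ᵥ ls :=
      neg_injective (hstat2.symm.trans hgrad)
    have hczero : ∀ i, A i ⬝ᵥ xs ≠ b i → l i - ls i = 0 := by
      intro i hi
      have h1 : ls i = 0 := hlszero i hi
      have h2 : l i = 0 := by
        rcases mul_eq_zero.mp (hqcomp i) with h | h
        · exact h
        · exact absurd (sub_eq_zero.mp h).symm hi
      rw [h1, h2, sub_zero]
    have hfull : ∑ i : Fin m, (l i - ls i) • A i = 0 := by
      have hz : Aᵀ *ᵥ (l - ls) = 0 := by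
        rw [Matrix.mulVec_sub, hAl, sub_self]
      funext j
      have h := congrFun hz j
      simp only [Matrix.mulVec, dotProduct, Matrix.transpose_apply,
        Pi.sub_apply, Pi.zero_apply] at h
      rw [Finset.sum_apply]
      simp only [Pi.smul_apply, smul_eq_mul, Pi.zero_apply]
      rw [← h]
      exact Finset.sum_congr rfl fun i _ => mul_comm _ _
    haveI : Fintype {i : Fin m // A i ⬝ᵥ xs = b i} := Fintype.ofFinite _
    have hsub : ∑ i : {i : Fin m // A i ⬝ᵥ xs = b i},
        (l i.1 - ls i.1) • A i.1 = 0 := by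
      have hs := Finset.sum_subtype (p := fun i => A i ⬝ᵥ xs = b i) (F := this)
        (Finset.univ.filter (fun i => A i ⬝ᵥ xs = b i))
        (fun x => by simp) (fun i => (l i - ls i) • A i)
      rw [← hs]
      rw [← hfull]
      apply Finset.sum_subset (Finset.filter_subset _ _)
      intro i _ hi
      have hni : ¬ A i ⬝ᵥ xs = b i := by simpa using hi
      rw [hczero i hni, zero_smul]
    have hall := Fintype.linearIndependent_iff.mp hlicq
      (fun i => l i.1 - ls i.1) hsub
    funext i
    by_cases hi : A i ⬝ᵥ xs = b i
    · have := hall ⟨i, hi⟩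
      simpa [sub_eq_zero] using this
    · have := hczero i hi
      linarith [sub_eq_zero.mp this]
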